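/- For integer strings A = (a_1,…,a_n) and B = (b_1,…,b_m), the pair ((a_1,…,a_n),(b_1,…,b_m)) is complementary if and only if the pair of reversed strings ((a_n,…,a_1),(b_m,…,b_1)) is complementary. -/

import Mathlib

/-- A 2-final expansion of a pair of integer strings: it transforms
`((a₁,…,aₙ),(b₁,…,bₘ))` into either `((a₁+1,a₂,…,aₙ),(b₁,…,bₘ,2))` or
`((2,a₁,…,aₙ),(b₁,…,bₘ₋₁,bₘ+1))`. -/
def TwoFinalExp : List ℤ × List ℤ → List ℤ × List ℤ → Prop := fun P Q =>
  (∃ (a : ℤ) (A B : List ℤ), P = (a :: A, B) ∧ Q = ((a + 1) :: A, B ++ [2])) ∨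
  (∃ (A B : List ℤ) (b : ℤ), P = (A, B ++ [b]) ∧ Q = (2 :: A, B ++ [b + 1]))

/-- A pair of integer strings is complementary if it is obtained from the pair
`((2),(2))` by a finite (possibly empty) sequence of 2-final expansions. -/
def Complementary (A B : List ℤ) : Prop :=
  Relation.ReflTransGen TwoFinalExp ([2], [2]) (A, B)

lemma comp_ne_nil {P : List ℤ × List ℤ}
    (h : Relation.ReflTransGen TwoFinalExp ([2], [2]) P) : P.1 ≠ [] ∧ P.2 ≠ [] := by
  induction h with
  | refl => simp
  | tail _ step _ =>
    rcases step with ⟨a, A, B, h1, rfl⟩ | ⟨A, B, b, h1, rfl⟩ <;> simp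

lemma step1 (a : ℤ) (A B : List ℤ) :
    TwoFinalExp (a :: A, B) ((a + 1) :: A, B ++ [2]) :=
  Or.inl ⟨a, A, B, rfl, rfl⟩

lemma step2 (A B : List ℤ) (b : ℤ) :
    TwoFinalExp (A, B ++ [b]) (2 :: A, B ++ [b + 1]) :=
  Or.inr ⟨A, B, b, rfl, rfl⟩

/-- Dual move 1: incrementing the *last* entry of the first string and
prepending 2 to the second string preserves complementarity. -/
lemma aux1 {P : List ℤ × List ℤ}
    (h : Relation.ReflTransGen TwoFinalExp ([2], [2]) P) :
    ∀ (A : List ℤ) (a : ℤ) (B : List ℤ), P = (A ++ [a], B) →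
      Complementary (A ++ [a + 1]) (2 :: B) := by
  induction h with
  | refl =>
    rintro A a B hP
    obtain ⟨h1, h2⟩ := Prod.mk.injEq .. ▸ hP
    match A, h1 with
    | [], h1 =>
      obtain rfl : a = 2 := by simpa using h1.symm
      subst h2
      have : TwoFinalExp ((2 : ℤ) :: [], [(2 : ℤ)]) (((2 : ℤ) + 1) :: [], [2] ++ [2]) :=
        step1 2 [] [2]
      simpa [Complementary] using Relation.ReflTransGen.single this
    | x :: A', h1 => simp at h1
  | tail hQ step ih =>
    rintro A a B hP
    rcases step with ⟨c, C, B₀, hq, hp⟩ | ⟨C, B₀, c, hq, hp⟩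
    · rw [hp] at hP
      obtain ⟨h1, rfl⟩ := Prod.mk.injEq .. ▸ hP
      match A, h1 with
      | [], h1 =>
        obtain ⟨rfl, hC⟩ : a = c + 1 ∧ [] = C := by simpa using h1.symm
        subst hC
        have hI := ih [] c B₀ (by simpa using hq)
        have := Relation.ReflTransGen.tail hI (step1 (c + 1) [] (2 :: B₀))
        simpa [Complementary] using this
      | x :: A', h1 =>
        obtain ⟨rfl, hC⟩ : x = c + 1 ∧ A' ++ [a] = C := by simpa using h1.symm
        subst hC
        have hI := ih (c :: A') a B₀ (by simpa using hq)
        have := Relation.ReflTransGen.tail hI (step1 c (A' ++ [a + 1]) (2 :: B₀))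
        simpa [Complementary] using this
    · rw [hp] at hP
      obtain ⟨h1, rfl⟩ := Prod.mk.injEq .. ▸ hP
      match A, h1 with
      | [], h1 =>
        obtain ⟨-, hC⟩ : a = 2 ∧ [] = C := by simpa using h1.symm
        subst hC
        subst hq
        exact absurd (comp_ne_nil hQ).1 (by simp)
      | x :: A', h1 =>
        obtain ⟨rfl, hC⟩ : x = 2 ∧ A' ++ [a] = C := by simpa using h1.symm
        subst hC
        have hI := ih (A') a (B₀ ++ [c]) (by simpa using hq)
        have hstep : TwoFinalExp (A' ++ [a + 1], (2 :: B₀) ++ [c])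
            (2 :: (A' ++ [a + 1]), (2 :: B₀) ++ [c + 1]) := step2 _ (2 :: B₀) c
        have := Relation.ReflTransGen.tail (by simpa [Complementary] using hI) hstep
        simpa [Complementary] using this

/-- Dual move 2: appending 2 to the first string and incrementing the *first*
entry of the second string preserves complementarity. -/
lemma aux2 {P : List ℤ × List ℤ}
    (h : Relation.ReflTransGen TwoFinalExp ([2], [2]) P) :
    ∀ (A : List ℤ) (b : ℤ) (B : List ℤ), P = (A, b :: B) →
      Complementary (A ++ [2]) ((b + 1) :: B) := by
  induction h with
  | refl =>
    rintro A b B hP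
    obtain ⟨rfl, h2⟩ := Prod.mk.injEq .. ▸ hP
    obtain ⟨rfl, rfl⟩ : b = 2 ∧ B = [] := by simpa using h2.symm
    have : TwoFinalExp ([(2 : ℤ)], [] ++ [(2 : ℤ)]) (2 :: [2], [] ++ [(2 : ℤ) + 1]) :=
      step2 [2] [] 2
    simpa [Complementary] using Relation.ReflTransGen.single this
  | tail hQ step ih =>
    rintro A b B hP
    rcases step with ⟨c, C, B₀, hq, hp⟩ | ⟨C, B₀, c, hq, hp⟩
    · rw [hp] at hP
      obtain ⟨rfl, h2⟩ := Prod.mk.injEq .. ▸ hP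
      match B₀, h2.symm with
      | [], h2 =>
        obtain ⟨rfl, rfl⟩ : b = 2 ∧ B = [] := by simpa using h2
        subst hq
        exact absurd (comp_ne_nil hQ).2 (by simp)
      | y :: B₁, h2 =>
        obtain ⟨hy, hB⟩ : b = y ∧ B = B₁ ++ [2] := by simpa using h2
        subst hy
        subst hB
        have hI := ih (c :: C) b B₁ (by simpa using hq)
        have := Relation.ReflTransGen.tail (show Relation.ReflTransGen TwoFinalExp ([2],[2])
          (c :: (C ++ [2]), (b + 1) :: B₁) by simpa [Complementary] using hI) (step1 c (C ++ [2]) ((b + 1) :: B₁))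
        simpa [Complementary] using this
    · rw [hp] at hP
      obtain ⟨rfl, h2⟩ := Prod.mk.injEq .. ▸ hP
      match B₀, h2.symm with
      | [], h2 =>
        obtain ⟨rfl, rfl⟩ : b = c + 1 ∧ B = [] := by simpa using h2
        have hI := ih C c [] (by simpa using hq)
        have hstep : TwoFinalExp (C ++ [2], [] ++ [c + 1])
            (2 :: (C ++ [2]), [] ++ [c + 1 + 1]) := step2 _ [] (c + 1)
        have := Relation.ReflTransGen.tail (by simpa [Complementary] using hI) hstep
        simpa [Complementary] using this
      | y :: B₁, h2 =>
        obtain ⟨hy, hB⟩ : b = y ∧ B = B₁ ++ [c + 1] := by simpa using h2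
        subst hy
        subst hB
        have hI := ih C b (B₁ ++ [c]) (by simpa using hq)
        have hstep : TwoFinalExp (C ++ [2], ((b + 1) :: B₁) ++ [c])
            (2 :: (C ++ [2]), ((b + 1) :: B₁) ++ [c + 1]) := step2 _ _ c
        have := Relation.ReflTransGen.tail (by simpa [Complementary] using hI) hstep
        simpa [Complementary] using this

lemma fwd {P : List ℤ × List ℤ}
    (h : Relation.ReflTransGen TwoFinalExp ([2], [2]) P) :
    Complementary P.1.reverse P.2.reverse := by
  induction h with
  | refl => exact Relation.ReflTransGen.refl
  | tail hQ step ih =>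
    rcases step with ⟨a, A, B, hq, rfl⟩ | ⟨A, B, b, hq, rfl⟩
    · subst hq
      have := aux1 ih A.reverse a B.reverse (by simp)
      simpa using this
    · subst hq
      have := aux2 ih A.reverse b B.reverse (by simp)
      simpa using this

/-- The pair `((a₁,…,aₙ),(b₁,…,bₘ))` is complementary if and only if the pair of
reversed strings `((aₙ,…,a₁),(bₘ,…,b₁))` is complementary. -/
theorem stmt3 (A B : List ℤ) :
    Complementary A B ↔ Complementary A.reverse B.reverse := by
  constructor
  · intro h
    exact fwd h
  · intro h
    have := fwd h
    simpa using this
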